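/- (State-evolution analogue of Proposition 2.1.) Let 𝓗 be a finite-dimensional complex inner product space, H : ℝ → (𝓗 →L[ℂ] 𝓗) continuous with each H(t) self-adjoint, and U : ℝ → (𝓗 →L[ℂ] 𝓗) differentiable with U(0) = 1, U(t) unitary, and i·U′(t) = H(t) ∘ U(t). Let ψ₁, …, ψ_m ∈ 𝓗 be orthonormal, set ψ_k(t) := U(t) ψ_k, let C(t)_{p k} := −⟨U(t)ψ_p, H(t) U(t)ψ_k⟩, let Ṽ solve i·Ṽ′(t) = C(t)·Ṽ(t) with Ṽ(0) = 1, and define ψ̃_k(t) := Σ_{p=1}^m Ṽ(t)_{p k} · ψ_p(t). Then ⟨ψ̃_p(t), (d/dt)ψ̃_k(t)⟩ = 0 for all 1 ≤ p, k ≤ m and all t. -/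

import Mathlib

open ContinuousLinearMap in
/-- State-evolution analogue of Proposition 2.1: with `ψ_k(t) = U(t)ψ_k` and
`C(t)_{pk} = −⟨U(t)ψ_p, H(t)U(t)ψ_k⟩`, the vectors `ψ̃_k(t) = Σ_p Ṽ(t)_{pk}·ψ_p(t)`
satisfy `⟨ψ̃_p(t), (d/dt)ψ̃_k(t)⟩ = 0`. -/
theorem state_parallel_transport_condition
    {𝓗 : Type*} [NormedAddCommGroup 𝓗] [InnerProductSpace ℂ 𝓗] [FiniteDimensional ℂ 𝓗]
    (Ham : ℝ → 𝓗 →L[ℂ] 𝓗) (hHcont : Continuous Ham)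
    (hHsa : ∀ t, IsSelfAdjoint (Ham t))
    (U U' : ℝ → 𝓗 →L[ℂ] 𝓗)
    (hU0 : U 0 = 1)
    (hUuni : ∀ t, adjoint (U t) ∘L U t = 1 ∧ U t ∘L adjoint (U t) = 1)
    (hUderiv : ∀ t, HasDerivAt U (U' t) t)
    (hSch : ∀ t, Complex.I • U' t = Ham t ∘L U t)
    (m : ℕ) (ψ : Fin m → 𝓗) (hψ : Orthonormal ℂ ψ)
    (C : ℝ → Matrix (Fin m) (Fin m) ℂ)
    (hC : ∀ t p k, C t p k = -(inner ℂ (U t (ψ p)) (Ham t (U t (ψ k))) : ℂ))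
    (V V' : ℝ → Matrix (Fin m) (Fin m) ℂ)
    (hV0 : V 0 = 1)
    (hVderiv : ∀ t p k, HasDerivAt (fun s => V s p k) (V' t p k) t)
    (hVode : ∀ t, Complex.I • V' t = C t * V t)
    (ψtil : Fin m → ℝ → 𝓗)
    (hψtil : ∀ k t, ψtil k t = ∑ p, V t p k • U t (ψ p)) :
    ∀ t, ∀ p k, ∃ v : 𝓗,
      HasDerivAt (ψtil k) v t ∧ (inner ℂ (ψtil p t) v : ℂ) = 0 := by
  intro t p k
  -- orthonormality of U t (ψ q)
  have horth : ∀ q r : Fin m,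
      (inner ℂ (U t (ψ q)) (U t (ψ r)) : ℂ) = if q = r then 1 else 0 := by
    intro q r
    have h1 : (inner ℂ (U t (ψ q)) (U t (ψ r)) : ℂ)
        = inner ℂ (ψ q) ((adjoint (U t) ∘L U t) (ψ r)) := by
      simp [ContinuousLinearMap.adjoint_inner_right]
    rw [h1, (hUuni t).1]
    simpa [orthonormal_iff_ite.mp hψ q r] using (orthonormal_iff_ite.mp hψ q r)
  -- U' applied to a vector
  have hU'app : ∀ x : 𝓗, U' t x = (-Complex.I) • Ham t (U t x) := by
    intro x
    have h := congrFun (congrArg DFunLike.coe (hSch t)) x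
    simp only [ContinuousLinearMap.smul_apply, ContinuousLinearMap.comp_apply] at h
    have := congrArg (fun y => (-Complex.I) • y) h
    simpa [smul_smul, Complex.I_mul_I] using this
  have hU'inner : ∀ q r : Fin m,
      (inner ℂ (U t (ψ q)) (U' t (ψ r)) : ℂ) = Complex.I * C t q r := by
    intro q r
    rw [hU'app, inner_smul_right, hC]
    ring
  -- derivative of ψtil k
  have hfun : ψtil k = fun s => ∑ q, V s q k • U s (ψ q) := by
    funext s; exact hψtil k s
  have hUapp : ∀ q : Fin m, HasDerivAt (fun s => U s (ψ q)) (U' t (ψ q)) t := by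
    intro q
    have := (((ContinuousLinearMap.apply ℂ 𝓗 (ψ q)).restrictScalars ℝ).hasFDerivAt.comp t
      (hUderiv t).hasFDerivAt).hasDerivAt
    simpa [Function.comp_def] using this
  set v : 𝓗 := ∑ q, (V t q k • U' t (ψ q) + V' t q k • U t (ψ q)) with hv
  have hderiv : HasDerivAt (ψtil k) v t := by
    rw [hfun, hv]
    exact HasDerivAt.fun_sum fun q _ => by
      simpa [add_comm] using (hVderiv t q k).fun_smul (hUapp q)
  refine ⟨v, hderiv, ?_⟩
  -- key algebraic fact from the ODE
  have hkey : ∀ q : Fin m, V' t q k + Complex.I * ∑ r, C t q r * V t r k = 0 := by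
    intro q
    have h := congrFun (congrFun (hVode t) q) k
    simp only [Matrix.smul_apply, Matrix.mul_apply, smul_eq_mul] at h
    have h2 : Complex.I * (Complex.I * V' t q k) = -V' t q k := by
      rw [← mul_assoc, Complex.I_mul_I, neg_one_mul]
    rw [← h, h2, add_neg_cancel]
  rw [hψtil, hv]
  rw [sum_inner]
  have hterm : ∀ q : Fin m, (inner ℂ (V t q p • U t (ψ q))
      (∑ r, (V t r k • U' t (ψ r) + V' t r k • U t (ψ r))) : ℂ) = 0 := by
    intro q
    rw [inner_smul_left, inner_sum]
    have : (∑ r, (inner ℂ (U t (ψ q)) (V t r k • U' t (ψ r) + V' t r k • U t (ψ r)) : ℂ))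
        = V' t q k + Complex.I * ∑ r, C t q r * V t r k := by
      simp only [inner_add_right, inner_smul_right, hU'inner, horth, Finset.sum_add_distrib,
        mul_ite, mul_one, mul_zero, Finset.sum_ite_eq', Finset.mem_univ, if_true,
        Finset.mul_sum]
      rw [Finset.sum_ite_eq, if_pos (Finset.mem_univ q), add_comm]
      congr 1
      exact Finset.sum_congr rfl fun x _ => by ring
    rw [this, hkey q, mul_zero]
  exact Finset.sum_eq_zero fun q _ => hterm q
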